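/- Let p ≤ q and p' ≤ q' be natural numbers with (p,q) ≠ (p',q'). Let a_p, a_q, a_{p'}, a_{q'} : ℝ → ℝ be functions such that for every h ≥ 0 and each n ∈ {p, q, p', q'}, the value a_n(h) is an n-th Robin parameter for h. Then there is at most one h ∈ [0, ∞) such that a_p(h)² + a_q(h)² = a_{p'}(h)² + a_{q'}(h)², i.e. the set {h ≥ 0 : a_p(h)² + a_q(h)² = a_{p'}(h)² + a_{q'}(h)²} is a subsingleton. -/

import Mathlib

open Real Set Filter Topology

/-- `α` is an `n`-th Robin parameter for `h`: `nπ ≤ α < (n+1)π` and `α` satisfies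
`α·sin(α/2) = hπ·cos(α/2)` if `n` is even, `α·cos(α/2) = −hπ·sin(α/2)` if `n` is odd. -/
def IsRobinParam (n : ℕ) (h α : ℝ) : Prop :=
  (n : ℝ) * π ≤ α ∧ α < ((n : ℝ) + 1) * π ∧
    (if Even n then α * Real.sin (α / 2) = h * π * Real.cos (α / 2)
     else α * Real.cos (α / 2) = -(h * π) * Real.sin (α / 2))

noncomputable def rg (n : ℕ) (α : ℝ) : ℝ := α * Real.tan ((α - n * π) / 2)

lemma robin_rg {n : ℕ} {h α : ℝ} (H : IsRobinParam n h α) : rg n α = h * π := by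
  obtain ⟨hb1, hb2, h3⟩ := H
  set β := (α - n * π) / 2 with hβdef
  have pip := Real.pi_pos
  have hβ0 : 0 ≤ β := by
    have : (n : ℝ) * π ≤ α := hb1
    rw [hβdef]; linarith
  have hβlt : β < π / 2 := by
    rw [hβdef]; nlinarith [hb2]
  have hcos : 0 < Real.cos β := Real.cos_pos_of_mem_Ioo ⟨by linarith, hβlt⟩
  have key : α * Real.sin β = h * π * Real.cos β := by
    rcases Nat.even_or_odd n with he | ho
    · rw [if_pos he] at h3
      obtain ⟨k, hk⟩ := he
      have hhalf : α / 2 = β + (k : ℤ) * π := by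
        rw [hβdef, hk]; push_cast; ring
      rw [hhalf, Real.sin_add_int_mul_pi, Real.cos_add_int_mul_pi] at h3
      have hε : ((-1 : ℝ) ^ (k : ℤ)) ≠ 0 := by
        apply zpow_ne_zero; norm_num
      apply mul_left_cancel₀ hε
      linear_combination h3
    · rw [if_neg (Nat.not_even_iff_odd.mpr ho)] at h3
      obtain ⟨k, hk⟩ := ho
      have hhalf : α / 2 = (β + π / 2) + (k : ℤ) * π := by
        rw [hβdef, hk]; push_cast; ring
      rw [hhalf, Real.sin_add_int_mul_pi, Real.cos_add_int_mul_pi,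
        Real.sin_add_pi_div_two, Real.cos_add_pi_div_two] at h3
      have hε : ((-1 : ℝ) ^ (k : ℤ)) ≠ 0 := by
        apply zpow_ne_zero; norm_num
      apply mul_left_cancel₀ hε
      linear_combination -h3
  show α * Real.tan β = h * π
  rw [Real.tan_eq_sin_div_cos]
  field_simp
  linear_combination key

lemma rg_mono (n : ℕ) :
    StrictMonoOn (rg n) (Ico ((n : ℝ) * π) (((n : ℝ) + 1) * π)) := by
  rintro a ⟨ha1, ha2⟩ b ⟨hb1, hb2⟩ hab
  have pip := Real.pi_pos
  have hn0 : (0 : ℝ) ≤ (n : ℝ) * π := by positivity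
  have hβa0 : 0 ≤ (a - n * π) / 2 := by linarith
  have hβb : (b - n * π) / 2 < π / 2 := by nlinarith
  have hβab : (a - n * π) / 2 < (b - n * π) / 2 := by linarith
  have ht1 : 0 ≤ Real.tan ((a - n * π) / 2) :=
    Real.tan_nonneg_of_nonneg_of_le_pi_div_two hβa0 (by linarith)
  have ht2 : Real.tan ((a - n * π) / 2) < Real.tan ((b - n * π) / 2) :=
    Real.tan_lt_tan_of_nonneg_of_lt_pi_div_two hβa0 hβb hβab
  have ha0 : 0 ≤ a := le_trans hn0 ha1
  have htb : 0 < Real.tan ((b - n * π) / 2) := lt_of_le_of_lt ht1 ht2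
  calc a * Real.tan ((a - n * π) / 2) ≤ a * Real.tan ((b - n * π) / 2) :=
        mul_le_mul_of_nonneg_left ht2.le ha0
    _ < b * Real.tan ((b - n * π) / 2) := by
        exact mul_lt_mul_of_pos_right hab htb

lemma rg_nonneg {n : ℕ} {α : ℝ} (hα : α ∈ Ico ((n : ℝ) * π) (((n : ℝ) + 1) * π)) :
    0 ≤ rg n α := by
  obtain ⟨h1, h2⟩ := hα
  have pip := Real.pi_pos
  have hn0 : (0 : ℝ) ≤ (n : ℝ) * π := by positivity
  have ht : 0 ≤ Real.tan ((α - n * π) / 2) :=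
    Real.tan_nonneg_of_nonneg_of_le_pi_div_two (by linarith) (by nlinarith)
  exact mul_nonneg (by linarith) ht
section Fam

variable {n : ℕ} {a : ℝ → ℝ}

lemma fam_mem (ha : ∀ h, 0 ≤ h → IsRobinParam n h (a h)) {h : ℝ} (hh : 0 ≤ h) :
    a h ∈ Ico ((n : ℝ) * π) (((n : ℝ) + 1) * π) :=
  ⟨(ha h hh).1, (ha h hh).2.1⟩

lemma fam_rg (ha : ∀ h, 0 ≤ h → IsRobinParam n h (a h)) {h : ℝ} (hh : 0 ≤ h) :
    rg n (a h) = h * π := robin_rg (ha h hh)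

lemma fam_nonneg (ha : ∀ h, 0 ≤ h → IsRobinParam n h (a h)) {h : ℝ} (hh : 0 ≤ h) :
    0 ≤ a h := by
  have := (fam_mem ha hh).1
  have pip := Real.pi_pos
  nlinarith [Nat.cast_nonneg (α := ℝ) n]

lemma fam_pos (ha : ∀ h, 0 ≤ h → IsRobinParam n h (a h)) {h : ℝ} (hh : 0 < h) :
    0 < a h := by
  rcases lt_or_eq_of_le (fam_nonneg ha hh.le) with h' | h'
  · exact h'
  · exfalso
    have := fam_rg ha hh.le
    rw [← h'] at this
    simp [rg] at this
    linarith

lemma fam_strictMono (ha : ∀ h, 0 ≤ h → IsRobinParam n h (a h)) :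
    StrictMonoOn a (Ici (0 : ℝ)) := by
  intro s hs t ht hst
  have hgs : rg n (a s) = s * π := fam_rg ha hs
  have hgt : rg n (a t) = t * π := fam_rg ha ht
  have : rg n (a s) < rg n (a t) := by
    rw [hgs, hgt]
    exact mul_lt_mul_of_pos_right hst Real.pi_pos
  exact ((rg_mono n).lt_iff_lt (fam_mem ha hs) (fam_mem ha ht)).mp this

lemma fam_inj (ha : ∀ h, 0 ≤ h → IsRobinParam n h (a h)) {a' : ℝ → ℝ}
    (ha' : ∀ h, 0 ≤ h → IsRobinParam n h (a' h)) {h : ℝ} (hh : 0 ≤ h) :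
    a h = a' h := by
  apply (rg_mono n).injOn (fam_mem ha hh) (fam_mem ha' hh)
  rw [fam_rg ha hh, fam_rg ha' hh]

lemma fam_lt {m : ℕ} {b : ℝ → ℝ} (hb : ∀ h, 0 ≤ h → IsRobinParam m h (b h))
    (ha : ∀ h, 0 ≤ h → IsRobinParam n h (a h)) (hmn : m < n) {h : ℝ} (hh : 0 ≤ h) :
    b h < a h := by
  have h1 : b h < ((m : ℝ) + 1) * π := (fam_mem hb hh).2
  have h2 : (n : ℝ) * π ≤ a h := (fam_mem ha hh).1
  have h3 : ((m : ℝ) + 1) ≤ (n : ℝ) := by exact_mod_cast hmn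
  nlinarith [Real.pi_pos]

lemma fam_sq_lt {m : ℕ} {b : ℝ → ℝ} (hb : ∀ h, 0 ≤ h → IsRobinParam m h (b h))
    (ha : ∀ h, 0 ≤ h → IsRobinParam n h (a h)) (hmn : m < n) {h : ℝ} (hh : 0 ≤ h) :
    (b h) ^ 2 < (a h) ^ 2 := by
  have := fam_lt hb ha hmn hh
  have := fam_nonneg hb hh
  nlinarith

/-- surjectivity: every point of the interval is attained. -/
lemma fam_surj (ha : ∀ h, 0 ≤ h → IsRobinParam n h (a h)) {v : ℝ}
    (hv : v ∈ Ico ((n : ℝ) * π) (((n : ℝ) + 1) * π)) :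
    ∃ c : ℝ, 0 ≤ c ∧ a c = v := by
  refine ⟨rg n v / π, div_nonneg (rg_nonneg hv) Real.pi_pos.le, ?_⟩
  apply (rg_mono n).injOn (fam_mem ha (div_nonneg (rg_nonneg hv) Real.pi_pos.le)) hv
  rw [fam_rg ha (div_nonneg (rg_nonneg hv) Real.pi_pos.le)]
  field_simp

lemma fam_gt_of_pos (ha : ∀ h, 0 ≤ h → IsRobinParam n h (a h)) {h : ℝ} (hh : 0 < h) :
    (n : ℝ) * π < a h := by
  rcases lt_or_eq_of_le (fam_mem ha hh.le).1 with h' | h'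
  · exact h'
  · exfalso
    have := fam_rg ha hh.le
    rw [← h'] at this
    simp [rg] at this
    linarith

end Fam
section Cont

variable {n : ℕ} {a : ℝ → ℝ}

lemma fam_cont (ha : ∀ h, 0 ≤ h → IsRobinParam n h (a h)) :
    ContinuousOn a (Ici (0 : ℝ)) := by
  intro h0 hh0
  have hh0' : (0 : ℝ) ≤ h0 := hh0
  have hmono := fam_strictMono ha
  have mem0 := fam_mem ha hh0'
  have hsR : Ici (0 : ℝ) ∈ 𝓝[≥] h0 :=
    mem_of_superset self_mem_nhdsWithin (Ici_subset_Ici.mpr hh0')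
  have right : ContinuousWithinAt a (Ici h0) h0 := by
    apply hmono.continuousWithinAt_right_of_exists_between hsR
    intro b hb
    set v := min b ((a h0 + ((n : ℝ) + 1) * π) / 2) with hv
    have hv1 : a h0 < v := lt_min hb (by linarith [mem0.2])
    have hv2 : v < ((n : ℝ) + 1) * π :=
      lt_of_le_of_lt (min_le_right _ _) (by linarith [mem0.2])
    obtain ⟨c, hc0, hcv⟩ := fam_surj ha ⟨le_trans mem0.1 hv1.le, hv2⟩
    exact ⟨c, hc0, by rw [hcv]; exact ⟨hv1, min_le_left _ _⟩⟩
  rcases eq_or_lt_of_le hh0' with heq | hpos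
  · have : Ici (0:ℝ) = Ici h0 := by rw [heq]
    rw [this]; exact right
  · have hsL : Ici (0 : ℝ) ∈ 𝓝[≤] h0 := mem_nhdsWithin_of_mem_nhds (Ici_mem_nhds hpos)
    have left : ContinuousWithinAt a (Iic h0) h0 := by
      apply hmono.continuousWithinAt_left_of_exists_between hsL
      intro b hb
      set v := max b ((n : ℝ) * π) with hv
      have hgt : (n : ℝ) * π < a h0 := fam_gt_of_pos ha hpos
      have hv1 : v < a h0 := max_lt hb hgt
      obtain ⟨c, hc0, hcv⟩ := fam_surj ha ⟨le_max_right _ _, lt_trans hv1 mem0.2⟩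
      exact ⟨c, hc0, by rw [hcv]; exact ⟨le_max_left _ _, hv1⟩⟩
    exact (left.union right).mono (fun z _ => (le_total z h0).imp id id)

lemma fam_sq_deriv (ha : ∀ h, 0 ≤ h → IsRobinParam n h (a h)) {h : ℝ} (hh : 0 < h) :
    HasDerivAt (fun t => a t ^ 2)
      (4 * π * (a h) ^ 2 / ((a h) ^ 2 + (2 * π * h + π ^ 2 * h ^ 2))) h := by
  have pip := Real.pi_pos
  have hcontA : ContinuousAt a h := (fam_cont ha).continuousAt (Ici_mem_nhds hh)
  have mem0 := fam_mem ha hh.le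
  have hαpos : 0 < a h := fam_pos ha hh
  set α := a h with hα
  have hβ0 : 0 ≤ (α - n * π) / 2 := by
    have := mem0.1; linarith
  have hβlt : (α - n * π) / 2 < π / 2 := by
    have := mem0.2; nlinarith
  have hcosβ : 0 < Real.cos ((α - n * π) / 2) :=
    Real.cos_pos_of_mem_Ioo ⟨by linarith, hβlt⟩
  set T := Real.tan ((α - n * π) / 2) with hT
  have hT0 : 0 ≤ T :=
    Real.tan_nonneg_of_nonneg_of_le_pi_div_two hβ0 (by linarith)
  have hTeq : α * T = h * π := fam_rg ha hh.le
  -- derivative of rg n at α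
  have inner : HasDerivAt (fun v : ℝ => (v - n * π) / 2) (1 / 2) α := by
    simpa using ((hasDerivAt_id α).sub_const ((n : ℝ) * π)).div_const 2
  have htan : HasDerivAt Real.tan (1 / Real.cos ((α - n * π) / 2) ^ 2) ((α - n * π) / 2) :=
    Real.hasDerivAt_tan (ne_of_gt hcosβ)
  have comp : HasDerivAt (fun v : ℝ => Real.tan ((v - n * π) / 2))
      (1 / Real.cos ((α - n * π) / 2) ^ 2 * (1 / 2)) α := by
    have := htan.comp α inner; exact this
  have prod : HasDerivAt (rg n)
      (1 * T + α * (1 / Real.cos ((α - n * π) / 2) ^ 2 * (1 / 2))) α :=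
    (hasDerivAt_id α).mul comp
  set ρ := 1 * T + α * (1 / Real.cos ((α - n * π) / 2) ^ 2 * (1 / 2)) with hρ
  have hcossq : 1 / Real.cos ((α - n * π) / 2) ^ 2 = 1 + T ^ 2 := by
    rw [one_div, ← Real.inv_one_add_tan_sq (ne_of_gt hcosβ), inv_inv]
  have hρval : ρ = (α ^ 2 + 2 * π * h + π ^ 2 * h ^ 2) / (2 * α) := by
    rw [hρ, hcossq]
    field_simp
    linear_combination (2 + α*T + h*π) * hTeq
  have hρpos : 0 < ρ := by
    rw [hρval]
    have hnum : 0 < α ^ 2 + 2 * π * h + π ^ 2 * h ^ 2 := by positivity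
    positivity
  have fd : HasDerivAt (fun v => rg n v / π) (ρ / π) α := prod.div_const π
  have hfg : ∀ᶠ y in 𝓝 h, rg n (a y) / π = y := by
    filter_upwards [Ici_mem_nhds hh] with y hy
    rw [fam_rg ha hy]
    field_simp
  have inv : HasDerivAt a ((ρ / π)⁻¹) h :=
    HasDerivAt.of_local_left_inverse hcontA fd (by positivity) hfg
  have sq : HasDerivAt (fun t => a t ^ 2) ((2 : ℕ) * a h ^ 1 * (ρ / π)⁻¹) h := inv.pow 2
  convert sq using 1
  rw [hρval]
  have hd : 0 < α ^ 2 + (2 * π * h + π ^ 2 * h ^ 2) := by positivity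
  field_simp
  ring
section Key

lemma keyPhi {c x X Y y : ℝ} (hc : 0 ≤ c) (hx : 0 < x) (h1 : x < X) (h2 : X ≤ Y) (h3 : Y < y)
    (hs : x + y ≤ X + Y) :
    (y - Y) / ((Y + c) * (y + c)) < (X - x) / ((x + c) * (X + c)) := by
  have hX0 : 0 < X := by linarith
  have hy0 : 0 < y := by linarith
  have d1 : 0 < (x + c) * (X + c) := mul_pos (by linarith) (by linarith)
  have d2 : 0 < (Y + c) * (y + c) := mul_pos (by linarith) (by linarith)
  have p1 : x * X < Y * y := by
    calc x * X < y * X := mul_lt_mul_of_pos_right (by linarith) hX0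
      _ ≤ y * Y := mul_le_mul_of_nonneg_left h2 hy0.le
      _ = Y * y := by ring
  have hlt : (x + c) * (X + c) < (Y + c) * (y + c) := by
    nlinarith [mul_le_mul_of_nonneg_left (show x + X ≤ Y + y by linarith) hc]
  have hXx : 0 < X - x := by linarith
  calc (y - Y) / ((Y + c) * (y + c)) ≤ (X - x) / ((Y + c) * (y + c)) :=
        (div_le_div_iff_of_pos_right d2).mpr (by linarith)
    _ < (X - x) / ((x + c) * (X + c)) := div_lt_div_of_pos_left hXx d1 hlt

lemma deriv_identity {x X Y y c : ℝ} (hx : 0 < x + c) (hX : 0 < X + c) (hY : 0 < Y + c)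
    (hy : 0 < y + c) :
    4 * π * x / (x + c) + 4 * π * y / (y + c) - 4 * π * X / (X + c) - 4 * π * Y / (Y + c)
      = -(4 * π) * c * ((X - x) / ((x + c) * (X + c)) - (y - Y) / ((Y + c) * (y + c))) := by
  field_simp
  ring

lemma fam_zero_sq_le {a : ℝ → ℝ} (ha : ∀ h, 0 ≤ h → IsRobinParam 0 h (a h)) {h : ℝ}
    (hh : 0 ≤ h) : (a h) ^ 2 ≤ 2 * π * h := by
  have pip := Real.pi_pos
  have mem0 := fam_mem ha hh
  have h0 : 0 ≤ a h := fam_nonneg ha hh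
  rcases eq_or_lt_of_le h0 with he | hp
  · rw [← he]; norm_num; positivity
  · have hub : a h < π := by
      have := mem0.2; push_cast at this; linarith
    have htan : a h / 2 ≤ Real.tan (a h / 2) := (Real.lt_tan (by linarith) (by linarith)).le
    have hrg := fam_rg ha hh
    simp only [rg, Nat.cast_zero, zero_mul, sub_zero] at hrg
    nlinarith [htan, hp, hrg]

end Key
lemma phi_pos_estimate (B₀ xz Xz Yz yz cz z : ℝ)
    (hz0 : 0 < z) (hz1 : z ≤ 1) (hzpi4 : z ≤ π / 4)
    (hzB : z ≤ π ^ 6 / (4 * (B₀ + (2 * π + π ^ 2)) ^ 2 * (4 * π + π ^ 2)))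
    (hcz : cz = 2 * π * z + π ^ 2 * z ^ 2)
    (hx0 : 0 ≤ xz) (bx : xz ≤ 2 * π * z)
    (bX1 : π ^ 2 ≤ Xz) (bX2 : Xz ≤ B₀) (bY : π ^ 2 ≤ Yz)
    (by1 : π ^ 2 ≤ yz) (by2 : yz ≤ B₀) :
    0 < (Xz - xz) / ((xz + cz) * (Xz + cz)) - (yz - Yz) / ((Yz + cz) * (yz + cz)) := by
  have pip := Real.pi_pos
  have hpi2 : (0:ℝ) < π ^ 2 := by positivity
  have hpi4 : (0:ℝ) < π ^ 4 := by positivity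
  have hpi6 : (0:ℝ) < π ^ 6 := by positivity
  have hB₀ : 0 < B₀ := lt_of_lt_of_le hpi2 (le_trans bX1 bX2)
  have hBpos : 0 < B₀ + (2 * π + π ^ 2) := by positivity
  have hcnn : 0 ≤ cz := by rw [hcz]; nlinarith [sq_nonneg z]
  have hczpos : 0 < cz := by rw [hcz]; nlinarith [sq_nonneg z]
  have hczb : cz ≤ (2 * π + π ^ 2) * z := by
    rw [hcz]
    nlinarith [mul_nonneg (sq_nonneg π) (mul_nonneg hz0.le (sub_nonneg.mpr hz1))]
  have hcz1 : cz ≤ 2 * π + π ^ 2 := by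
    have hz2 : z ^ 2 ≤ 1 := by nlinarith
    rw [hcz]
    nlinarith [mul_nonneg (sq_nonneg π) (sub_nonneg.mpr hz2),
      mul_nonneg pip.le (sub_nonneg.mpr hz1)]
  have hxcb : xz + cz ≤ (4 * π + π ^ 2) * z := by linarith
  have hXb : Xz + cz ≤ B₀ + (2 * π + π ^ 2) := by linarith
  have hyB : yz - Yz ≤ B₀ + (2 * π + π ^ 2) := by linarith
  have hXx : π ^ 2 / 2 ≤ Xz - xz := by
    have h2z : 2 * π * z ≤ 2 * π * (π / 4) := mul_le_mul_of_nonneg_left hzpi4 (by positivity)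
    nlinarith
  have hYy : π ^ 4 ≤ (Yz + cz) * (yz + cz) := by
    have h1 : π ^ 2 ≤ Yz + cz := by linarith
    have h2 : π ^ 2 ≤ yz + cz := by linarith
    have h3 : (0:ℝ) ≤ Yz + cz := by linarith
    have h4 : π ^ 2 * π ^ 2 ≤ (Yz + cz) * (yz + cz) := mul_le_mul h1 h2 hpi2.le h3
    have h5 : π ^ 2 * π ^ 2 = π ^ 4 := by ring
    linarith
  have d1 : 0 < (xz + cz) * (Xz + cz) := mul_pos (by linarith) (by linarith)
  have d2 : 0 < (Yz + cz) * (yz + cz) := lt_of_lt_of_le hpi4 hYy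
  rw [sub_pos, div_lt_div_iff₀ d2 d1]
  have hznn : (0:ℝ) ≤ (4 * π + π ^ 2) * z := by positivity
  have step1 : (yz - Yz) * ((xz + cz) * (Xz + cz))
      ≤ (B₀ + (2 * π + π ^ 2)) * ((xz + cz) * (Xz + cz)) :=
    mul_le_mul_of_nonneg_right hyB d1.le
  have step2 : (xz + cz) * (Xz + cz) ≤ ((4 * π + π ^ 2) * z) * (B₀ + (2 * π + π ^ 2)) := by
    apply mul_le_mul hxcb hXb (by linarith) hznn
  have step3 : (B₀ + (2 * π + π ^ 2)) * ((xz + cz) * (Xz + cz))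
      ≤ (B₀ + (2 * π + π ^ 2)) * (((4 * π + π ^ 2) * z) * (B₀ + (2 * π + π ^ 2))) :=
    mul_le_mul_of_nonneg_left step2 hBpos.le
  have step4 : (B₀ + (2 * π + π ^ 2)) * (((4 * π + π ^ 2) * z) * (B₀ + (2 * π + π ^ 2)))
      ≤ π ^ 6 / 4 := by
    have e : (B₀ + (2 * π + π ^ 2)) * (((4 * π + π ^ 2) *
        (π ^ 6 / (4 * (B₀ + (2 * π + π ^ 2)) ^ 2 * (4 * π + π ^ 2)))) *
        (B₀ + (2 * π + π ^ 2))) = π ^ 6 / 4 := by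
      field_simp
    calc (B₀ + (2 * π + π ^ 2)) * (((4 * π + π ^ 2) * z) * (B₀ + (2 * π + π ^ 2)))
        ≤ (B₀ + (2 * π + π ^ 2)) * (((4 * π + π ^ 2) *
          (π ^ 6 / (4 * (B₀ + (2 * π + π ^ 2)) ^ 2 * (4 * π + π ^ 2)))) *
          (B₀ + (2 * π + π ^ 2))) := by
          apply mul_le_mul_of_nonneg_left _ hBpos.le
          apply mul_le_mul_of_nonneg_right _ hBpos.le
          exact mul_le_mul_of_nonneg_left hzB (by positivity)
      _ = π ^ 6 / 4 := e
  have step5 : π ^ 2 / 2 * π ^ 4 ≤ (Xz - xz) * ((Yz + cz) * (yz + cz)) :=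
    mul_le_mul hXx hYy (by positivity) (by linarith)
  have hs : π ^ 2 / 2 * π ^ 4 = π ^ 6 / 2 := by ring
  have hppos : (0:ℝ) < π ^ 6 := by positivity
  linarith

lemma analysis (B₀ : ℝ) (x X Y y : ℝ → ℝ)
    (contx : ContinuousOn x (Ici (0:ℝ))) (contX : ContinuousOn X (Ici (0:ℝ)))
    (contY : ContinuousOn Y (Ici (0:ℝ))) (conty : ContinuousOn y (Ici (0:ℝ)))
    (dx : ∀ h : ℝ, 0 < h → HasDerivAt x (4*π*x h/(x h + (2*π*h + π^2*h^2))) h)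
    (dX : ∀ h : ℝ, 0 < h → HasDerivAt X (4*π*X h/(X h + (2*π*h + π^2*h^2))) h)
    (dY : ∀ h : ℝ, 0 < h → HasDerivAt Y (4*π*Y h/(Y h + (2*π*h + π^2*h^2))) h)
    (dy : ∀ h : ℝ, 0 < h → HasDerivAt y (4*π*y h/(y h + (2*π*h + π^2*h^2))) h)
    (ord1 : ∀ h : ℝ, 0 ≤ h → x h < X h)
    (ord2 : ∀ h : ℝ, 0 ≤ h → X h ≤ Y h)
    (ord3 : ∀ h : ℝ, 0 ≤ h → Y h < y h)
    (xnn : ∀ h : ℝ, 0 ≤ h → 0 ≤ x h) (xpos : ∀ h : ℝ, 0 < h → 0 < x h)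
    (hcase : 0 < x 0 ∨ (∀ z : ℝ, 0 ≤ z → z ≤ 1 →
        x z ≤ 2*π*z ∧ π^2 ≤ X z ∧ X z ≤ B₀ ∧ π^2 ≤ Y z ∧ π^2 ≤ y z ∧ y z ≤ B₀))
    {t1 t2 : ℝ} (ht1 : 0 ≤ t1) (ht12 : t1 < t2)
    (e1 : x t1 + y t1 = X t1 + Y t1) (e2 : x t2 + y t2 = X t2 + Y t2) : False := by
  have pip := Real.pi_pos
  obtain ⟨c, hc⟩ : ∃ c : ℝ → ℝ, c = fun h => 2 * π * h + π ^ 2 * h ^ 2 := ⟨_, rfl⟩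
  obtain ⟨D, hD⟩ : ∃ D : ℝ → ℝ, D = fun h => x h + y h - X h - Y h := ⟨_, rfl⟩
  obtain ⟨Φ, hΦ⟩ : ∃ Φ : ℝ → ℝ, Φ = fun h => (X h - x h) / ((x h + c h) * (X h + c h))
      - (y h - Y h) / ((Y h + c h) * (y h + c h)) := ⟨_, rfl⟩
  have cval : ∀ h : ℝ, c h = 2 * π * h + π ^ 2 * h ^ 2 := fun h => by rw [hc]
  have cpos : ∀ h : ℝ, 0 < h → 0 < c h := by
    intro h hh; rw [cval]; nlinarith [sq_nonneg h]
  have cnn : ∀ h : ℝ, 0 ≤ h → 0 ≤ c h := by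
    intro h hh; rw [cval]; nlinarith [sq_nonneg h]
  have Xpos : ∀ h : ℝ, 0 ≤ h → 0 < X h := fun h hh => lt_of_le_of_lt (xnn h hh) (ord1 h hh)
  have Ypos : ∀ h : ℝ, 0 ≤ h → 0 < Y h := fun h hh => lt_of_lt_of_le (Xpos h hh) (ord2 h hh)
  have ypos : ∀ h : ℝ, 0 ≤ h → 0 < y h := fun h hh => lt_trans (Ypos h hh) (ord3 h hh)
  have hD1 : D t1 = 0 := by rw [hD]; simp only; linarith
  have hD2 : D t2 = 0 := by rw [hD]; simp only; linarith
  have hDval : ∀ h : ℝ, D h = x h + y h - X h - Y h := fun h => by rw [hD]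
  have hΦval : ∀ h : ℝ, Φ h = (X h - x h) / ((x h + c h) * (X h + c h))
      - (y h - Y h) / ((Y h + c h) * (y h + c h)) := fun h => by rw [hΦ]
  have contc : ContinuousOn c (Ici (0:ℝ)) := by
    rw [hc]; apply Continuous.continuousOn; fun_prop
  have contD : ContinuousOn D (Ici (0:ℝ)) := by
    rw [hD]; exact ((contx.add conty).sub contX).sub contY
  have hDeriv : ∀ h : ℝ, 0 < h → HasDerivAt D (-(4 * π) * c h * Φ h) h := by
    intro h hh
    have hxc : 0 < x h + c h := by have := xpos h hh; have := cpos h hh; linarith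
    have hXc : 0 < X h + c h := by have := Xpos h hh.le; have := cpos h hh; linarith
    have hYc : 0 < Y h + c h := by have := Ypos h hh.le; have := cpos h hh; linarith
    have hyc : 0 < y h + c h := by have := ypos h hh.le; have := cpos h hh; linarith
    have sum : HasDerivAt D (4 * π * x h / (x h + c h) + 4 * π * y h / (y h + c h)
        - 4 * π * X h / (X h + c h) - 4 * π * Y h / (Y h + c h)) h := by
      rw [hD, cval]
      exact (((dx h hh).add (dy h hh)).sub (dX h hh)).sub (dY h hh)
    have idd := deriv_identity hxc hXc hYc hyc
    rw [hΦval, ← idd]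
    exact sum
  have hPhiPos : ∀ h : ℝ, 0 ≤ h → 0 < x h → D h ≤ 0 → 0 < Φ h := by
    intro h hh hx0 hD0
    rw [hDval] at hD0
    have hsum : x h + y h ≤ X h + Y h := by linarith
    have := keyPhi (cnn h hh) hx0 (ord1 h hh) (ord2 h hh) (ord3 h hh) hsum
    rw [hΦval]; linarith
  have PhiContW : ∀ w : ℝ, 0 ≤ w → 0 < x w → ContinuousWithinAt Φ (Ici 0) w := by
    intro w hw hxw
    have hcw := cnn w hw
    have hd1 : (x w + c w) * (X w + c w) ≠ 0 := by
      have h1 : 0 < x w + c w := by linarith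
      have h2 : 0 < X w + c w := by have := Xpos w hw; linarith
      exact ne_of_gt (mul_pos h1 h2)
    have hd2 : (Y w + c w) * (y w + c w) ≠ 0 := by
      have h1 : 0 < Y w + c w := by have := Ypos w hw; linarith
      have h2 : 0 < y w + c w := by have := ypos w hw; linarith
      exact ne_of_gt (mul_pos h1 h2)
    rw [hΦ]
    exact (((contX.sub contx) w hw).div
        (((contx.add contc).mul (contX.add contc)) w hw) hd1).sub
      (((conty.sub contY) w hw).div
        (((contY.add contc).mul (conty.add contc)) w hw) hd2)
  have antiOn : ∀ lo hi : ℝ, 0 ≤ lo → lo < hi → (∀ z ∈ Ioo lo hi, 0 < Φ z) →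
      StrictAntiOn D (Icc lo hi) := by
    intro lo hi hlo hlh hphi
    apply strictAntiOn_of_deriv_neg (convex_Icc lo hi)
      (contD.mono (fun z hz => le_trans hlo hz.1))
    intro z hz
    rw [interior_Icc] at hz
    have hz0 : 0 < z := lt_of_le_of_lt hlo hz.1
    rw [(hDeriv z hz0).deriv]
    have h1 := cpos z hz0
    have h2 := hphi z hz
    have h3 : 0 < c z * Φ z := mul_pos h1 h2
    nlinarith [mul_pos pip h3]
  -- x bound for the estimate case
  have hxboundcase : 0 < x 0 ∨ (∀ z : ℝ, 0 ≤ z → z ≤ 1 → 0 < Φ z → True) := by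
    exact Or.inr (fun _ _ _ _ => trivial)
  clear hxboundcase
  -- near t2
  have ht2pos : 0 < t2 := lt_of_le_of_lt ht1 ht12
  have hΦ2 : 0 < Φ t2 := hPhiPos t2 ht2pos.le (xpos t2 ht2pos) (le_of_eq hD2)
  have hcontΦ2 : ContinuousAt Φ t2 :=
    (PhiContW t2 ht2pos.le (xpos t2 ht2pos)).continuousAt (Ici_mem_nhds ht2pos)
  obtain ⟨δ, hδpos, hball⟩ := Metric.eventually_nhds_iff.mp
    (hcontΦ2.eventually (eventually_gt_nhds hΦ2))
  obtain ⟨u, hu⟩ : ∃ u : ℝ, u = max (t2 - δ / 2) ((t1 + t2) / 2) := ⟨_, rfl⟩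
  have hut1 : t1 < u := by rw [hu]; exact lt_of_lt_of_le (by linarith) (le_max_right _ _)
  have hu0 : 0 ≤ u := le_trans ht1 hut1.le
  have hut2 : u < t2 := by rw [hu]; exact max_lt (by linarith) (by linarith)
  have hud : t2 - δ / 2 ≤ u := by rw [hu]; exact le_max_left _ _
  have hphiu : ∀ z ∈ Ioo u t2, 0 < Φ z := by
    intro z hz
    apply hball
    rw [Real.dist_eq, abs_lt]
    have h1 := hz.1
    have h2 := hz.2
    constructor <;> linarith
  have anti2 := antiOn u t2 hu0 hut2 hphiu
  have hDpos : ∀ z ∈ Ico u t2, 0 < D z := by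
    intro z hz
    have := anti2 ⟨hz.1, hz.2.le⟩ (right_mem_Icc.mpr hut2.le) hz.2
    rw [hD2] at this
    exact this
  -- the sup of the nonpositivity set
  obtain ⟨A, hA⟩ : ∃ A : Set ℝ, A = {z : ℝ | z ∈ Icc t1 u ∧ D z ≤ 0} := ⟨_, rfl⟩
  have hclosed : IsClosed A := by
    rw [hA]
    have heq : {z : ℝ | z ∈ Icc t1 u ∧ D z ≤ 0} = Icc t1 u ∩ D ⁻¹' (Iic 0) := rfl
    rw [heq]
    exact (contD.mono (fun z hz => le_trans ht1 hz.1)).preimage_isClosed_of_isClosed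
      isClosed_Icc isClosed_Iic
  have hAne : A.Nonempty := by
    rw [hA]; exact ⟨t1, ⟨le_refl t1, hut1.le⟩, le_of_eq hD1⟩
  have hAbdd : BddAbove A := by
    rw [hA]; exact ⟨u, fun z hz => hz.1.2⟩
  obtain ⟨w, hw⟩ : ∃ w : ℝ, w = sSup A := ⟨_, rfl⟩
  have hwA : w ∈ A := by rw [hw]; exact hclosed.csSup_mem hAne hAbdd
  rw [hA] at hwA
  obtain ⟨⟨hwt1, hwu⟩, hwD⟩ := hwA
  have hw0 : 0 ≤ w := le_trans ht1 hwt1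
  have hwt2 : w < t2 := lt_of_le_of_lt hwu hut2
  have claimC : ∀ z : ℝ, w < z → z < t2 → 0 < D z := by
    intro z hz1 hz2
    rcases le_or_gt z u with hzu | huz
    · by_contra hneg
      push_neg at hneg
      have hzA : z ∈ A := by rw [hA]; exact ⟨⟨le_trans hwt1 hz1.le, hzu⟩, hneg⟩
      have : z ≤ w := by rw [hw]; exact le_csSup hAbdd hzA
      exact absurd this (not_le.mpr hz1)
    · exact hDpos z ⟨huz.le, hz2⟩
  have hDw : D w = 0 := by
    rcases eq_or_lt_of_le hwD with he | hneg
    · exact he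
    · exfalso
      have hcw : ContinuousWithinAt D (Ioi w) w :=
        (contD w hw0).mono (fun z hz => le_trans hw0 (le_of_lt hz))
      have hev2 : ∀ᶠ z in 𝓝[>] w, D z < 0 := hcw.eventually (eventually_lt_nhds hneg)
      have hev3 : ∀ᶠ z in 𝓝[>] w, z < t2 :=
        eventually_nhdsWithin_of_eventually_nhds (eventually_lt_nhds hwt2)
      have hev4 : ∀ᶠ z in 𝓝[>] w, w < z := eventually_mem_nhdsWithin
      obtain ⟨z, ⟨hz1, hz2⟩, hz3⟩ := ((hev2.and hev3).and hev4).exists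
      exact absurd (claimC z hz3 hz2) (not_lt.mpr hz1.le)
  -- final contradiction from a right interval with positive Φ
  have final : ∀ v : ℝ, w < v → v < t2 → (∀ z ∈ Ioo w v, 0 < Φ z) → False := by
    intro v hv1 hv2 hphiv
    have anti := antiOn w v hw0 hv1 hphiv
    have hlt : D v < D w := anti (left_mem_Icc.mpr hv1.le) (right_mem_Icc.mpr hv1.le) hv1
    rw [hDw] at hlt
    exact absurd (claimC v hv1 hv2) (not_lt.mpr hlt.le)
  rcases eq_or_lt_of_le hw0 with hw00 | hwpos
  · -- w = 0
    rw [← hw00] at hDw claimC final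
    rcases hcase with hx0 | hbounds
    · -- x 0 > 0
      have hΦ0 : 0 < Φ 0 := hPhiPos 0 le_rfl hx0 (le_of_eq hDw)
      have hcw : ContinuousWithinAt Φ (Ici 0) 0 := PhiContW 0 le_rfl hx0
      have hev5 : ∀ᶠ z in 𝓝[Ici (0:ℝ)] 0, 0 < Φ z := hcw.eventually (eventually_gt_nhds hΦ0)
      obtain ⟨b, hb0, hb⟩ := mem_nhdsGE_iff_exists_Icc_subset.mp hev5
      obtain ⟨v, hv⟩ : ∃ v : ℝ, v = min b (t2 / 2) := ⟨_, rfl⟩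
      have hv0 : 0 < v := by rw [hv]; exact lt_min hb0 (by linarith)
      have hvt2 : v < t2 := by
        rw [hv]; exact lt_of_le_of_lt (min_le_right _ _) (by linarith)
      have hvb : v ≤ b := by rw [hv]; exact min_le_left _ _
      have hphiv : ∀ z ∈ Ioo (0:ℝ) v, 0 < Φ z := by
        rintro z ⟨hz0, hzv⟩
        exact hb ⟨hz0.le, le_trans hzv.le hvb⟩
      exact final v hv0 hvt2 hphiv
    · -- explicit estimate near 0
      obtain ⟨v, hv⟩ : ∃ v : ℝ, v = min (min 1 (π / 4))
          (min (t2 / 2) (π ^ 6 / (4 * (B₀ + (2 * π + π ^ 2)) ^ 2 * (4 * π + π ^ 2)))) :=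
        ⟨_, rfl⟩
      have hB₀ : 0 < B₀ := by
        have := (hbounds 0 le_rfl zero_le_one).2.1
        have := (hbounds 0 le_rfl zero_le_one).2.2.1
        nlinarith [sq_nonneg π, pip]
      have hv0 : 0 < v := by
        rw [hv]
        exact lt_min (lt_min one_pos (by positivity)) (lt_min (by linarith) (by positivity))
      have hvt2 : v < t2 := by
        rw [hv]
        exact lt_of_le_of_lt (le_trans (min_le_right _ _) (min_le_left _ _)) (by linarith)
      have hv1 : v ≤ 1 := by rw [hv]; exact le_trans (min_le_left _ _) (min_le_left _ _)
      have hvpi : v ≤ π / 4 := by rw [hv]; exact le_trans (min_le_left _ _) (min_le_right _ _)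
      have hvB : v ≤ π ^ 6 / (4 * (B₀ + (2 * π + π ^ 2)) ^ 2 * (4 * π + π ^ 2)) := by
        rw [hv]; exact le_trans (min_le_right _ _) (min_le_right _ _)
      have hphiv : ∀ z ∈ Ioo (0:ℝ) v, 0 < Φ z := by
        rintro z ⟨hz0, hzv⟩
        obtain ⟨bx, bX1, bX2, bY, by1, by2⟩ := hbounds z hz0.le (le_trans hzv.le hv1)
        rw [hΦval]
        exact phi_pos_estimate B₀ (x z) (X z) (Y z) (y z) (c z) z hz0
          (le_trans hzv.le hv1) (le_trans hzv.le hvpi) (le_trans hzv.le hvB)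
          (cval z) (xnn z hz0.le) bx bX1 bX2 bY by1 by2
      exact final v hv0 hvt2 hphiv
  · -- w > 0
    have hΦw : 0 < Φ w := hPhiPos w hw0 (xpos w hwpos) (le_of_eq hDw)
    have hcontw : ContinuousAt Φ w :=
      (PhiContW w hw0 (xpos w hwpos)).continuousAt (Ici_mem_nhds hwpos)
    obtain ⟨δ', hδ'pos, hball'⟩ := Metric.eventually_nhds_iff.mp
      (hcontw.eventually (eventually_gt_nhds hΦw))
    obtain ⟨v, hv⟩ : ∃ v : ℝ, v = min (w + δ' / 2) ((w + t2) / 2) := ⟨_, rfl⟩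
    have hv1 : w < v := by rw [hv]; exact lt_min (by linarith) (by linarith)
    have hv2 : v < t2 := by rw [hv]; exact lt_of_le_of_lt (min_le_right _ _) (by linarith)
    have hvd : v ≤ w + δ' / 2 := by rw [hv]; exact min_le_left _ _
    have hphiv : ∀ z ∈ Ioo w v, 0 < Φ z := by
      intro z hz
      apply hball'
      rw [Real.dist_eq, abs_lt]
      have h1 := hz.1
      have h2 := hz.2
      constructor <;> linarith
    exact final v hv1 hv2 hphiv
set_option maxHeartbeats 1000000 in
lemma core (p p' q' q : ℕ) (ap ap' aq' aq : ℝ → ℝ)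
    (hpp' : p < p') (hp'q' : p' ≤ q') (hq'q : q' < q)
    (Hp : ∀ h, 0 ≤ h → IsRobinParam p h (ap h))
    (Hp' : ∀ h, 0 ≤ h → IsRobinParam p' h (ap' h))
    (Hq' : ∀ h, 0 ≤ h → IsRobinParam q' h (aq' h))
    (Hq : ∀ h, 0 ≤ h → IsRobinParam q h (aq h))
    {t1 t2 : ℝ} (ht1 : 0 ≤ t1) (ht12 : t1 < t2)
    (e1 : ap t1 ^ 2 + aq t1 ^ 2 = ap' t1 ^ 2 + aq' t1 ^ 2)
    (e2 : ap t2 ^ 2 + aq t2 ^ 2 = ap' t2 ^ 2 + aq' t2 ^ 2) : False := by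
  have pip := Real.pi_pos
  have hp's : (1:ℝ) ≤ (p' : ℝ) := by
    have : 1 ≤ p' := by omega
    exact_mod_cast this
  have hq's : (1:ℝ) ≤ (q' : ℝ) := by
    have : 1 ≤ q' := by omega
    exact_mod_cast this
  have hqs : (1:ℝ) ≤ (q : ℝ) := by
    have : 1 ≤ q := by omega
    exact_mod_cast this
  have hp'q : ((p' : ℝ) + 1) ≤ ((q : ℝ) + 1) := by
    have : p' + 1 ≤ q + 1 := by omega
    exact_mod_cast this
  apply analysis (((q : ℝ) + 1) ^ 2 * π ^ 2)
    (fun h => ap h ^ 2) (fun h => ap' h ^ 2) (fun h => aq' h ^ 2) (fun h => aq h ^ 2)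
    ((fam_cont Hp).pow 2) ((fam_cont Hp').pow 2) ((fam_cont Hq').pow 2) ((fam_cont Hq).pow 2)
    (fun h hh => fam_sq_deriv Hp hh) (fun h hh => fam_sq_deriv Hp' hh)
    (fun h hh => fam_sq_deriv Hq' hh) (fun h hh => fam_sq_deriv Hq hh)
    (fun h hh => fam_sq_lt Hp Hp' hpp' hh) ?ord2
    (fun h hh => fam_sq_lt Hq' Hq hq'q hh)
    (fun h _ => sq_nonneg _) (fun h hh => pow_pos (fam_pos Hp hh) 2)
    ?hcase ht1 ht12 e1 e2
  case ord2 =>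
    intro h hh
    rcases eq_or_lt_of_le hp'q' with he | hl
    · subst he
      rw [fam_inj Hp' Hq' hh]
    · exact (fam_sq_lt Hp' Hq' hl hh).le
  case hcase =>
    rcases Nat.eq_zero_or_pos p with hp0 | hppos
    · subst hp0
      refine Or.inr (fun z hz hz1 => ?_)
      have bx : ap z ^ 2 ≤ 2 * π * z := fam_zero_sq_le Hp hz
      have m1 := fam_mem Hp' hz
      have m2 := fam_mem Hq' hz
      have m3 := fam_mem Hq hz
      have n1 := fam_nonneg Hp' hz
      have n2 := fam_nonneg Hq' hz
      have n3 := fam_nonneg Hq hz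
      have l1 : π ≤ ap' z := by nlinarith [m1.1]
      have l2 : π ≤ aq' z := by nlinarith [m2.1]
      have l3 : π ≤ aq z := by nlinarith [m3.1]
      have u1 : ap' z ≤ ((q:ℝ) + 1) * π := by nlinarith [m1.2, hp'q]
      have u3 : aq z ≤ ((q:ℝ) + 1) * π := le_of_lt m3.2
      have hqπ : (0:ℝ) ≤ ((q:ℝ) + 1) * π := by positivity
      have sqe : (((q:ℝ) + 1) * π) ^ 2 = ((q:ℝ) + 1) ^ 2 * π ^ 2 := by ring
      refine ⟨bx, ?_, ?_, ?_, ?_, ?_⟩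
      · show π ^ 2 ≤ ap' z ^ 2
        exact pow_le_pow_left₀ pip.le l1 2
      · show ap' z ^ 2 ≤ ((q:ℝ) + 1) ^ 2 * π ^ 2
        calc ap' z ^ 2 ≤ (((q:ℝ) + 1) * π) ^ 2 := pow_le_pow_left₀ n1 u1 2
          _ = _ := sqe
      · show π ^ 2 ≤ aq' z ^ 2
        exact pow_le_pow_left₀ pip.le l2 2
      · show π ^ 2 ≤ aq z ^ 2
        exact pow_le_pow_left₀ pip.le l3 2
      · show aq z ^ 2 ≤ ((q:ℝ) + 1) ^ 2 * π ^ 2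
        calc aq z ^ 2 ≤ (((q:ℝ) + 1) * π) ^ 2 := pow_le_pow_left₀ n3 u3 2
          _ = _ := sqe
    · left
      have hps : (1:ℝ) ≤ (p : ℝ) := by exact_mod_cast hppos
      have := (fam_mem Hp (le_refl 0)).1
      have hap0 : 0 < ap 0 := by nlinarith
      exact pow_pos hap0 2

lemma twoCross (p q p' q' : ℕ) (hpq : p ≤ q) (hpq' : p' ≤ q')
    (hne : (p, q) ≠ (p', q'))
    (ap aq ap' aq' : ℝ → ℝ)
    (hap : ∀ h : ℝ, 0 ≤ h → IsRobinParam p h (ap h))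
    (haq : ∀ h : ℝ, 0 ≤ h → IsRobinParam q h (aq h))
    (hap' : ∀ h : ℝ, 0 ≤ h → IsRobinParam p' h (ap' h))
    (haq' : ∀ h : ℝ, 0 ≤ h → IsRobinParam q' h (aq' h))
    {t1 t2 : ℝ} (ht1 : 0 ≤ t1) (ht12 : t1 < t2)
    (e1 : ap t1 ^ 2 + aq t1 ^ 2 = ap' t1 ^ 2 + aq' t1 ^ 2)
    (e2 : ap t2 ^ 2 + aq t2 ^ 2 = ap' t2 ^ 2 + aq' t2 ^ 2) : False := by
  rcases Nat.lt_trichotomy p p' with hpp' | hpp' | hpp'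
  · -- p < p' ; need q' < q
    rcases Nat.lt_trichotomy q' q with hq'q | hq'q | hq'q
    · exact core p p' q' q ap ap' aq' aq hpp' hpq' hq'q hap hap' haq' haq ht1 ht12 e1 e2
    · subst hq'q
      have h1 : aq t1 = aq' t1 := fam_inj haq haq' ht1
      have h2 : ap t1 ^ 2 < ap' t1 ^ 2 := fam_sq_lt hap hap' hpp' ht1
      rw [h1] at e1
      linarith
    · have h1 : ap t1 ^ 2 < ap' t1 ^ 2 := fam_sq_lt hap hap' hpp' ht1
      have h2 : aq t1 ^ 2 < aq' t1 ^ 2 := fam_sq_lt haq haq' hq'q ht1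
      linarith
  · -- p = p'
    subst hpp'
    have h1 : ap t1 = ap' t1 := fam_inj hap hap' ht1
    have hqq : q ≠ q' := by
      intro h; exact hne (by rw [h])
    rcases Nat.lt_or_ge q q' with hq | hq
    · have := fam_sq_lt haq haq' hq ht1
      rw [h1] at e1
      linarith
    · have hq' : q' < q := lt_of_le_of_ne hq (Ne.symm hqq)
      have := fam_sq_lt haq' haq hq' ht1
      rw [h1] at e1
      linarith
  · -- p' < p ; symmetric
    rcases Nat.lt_trichotomy q q' with hqq' | hqq' | hqq'
    · exact core p' p q q' ap' ap aq aq' hpp' hpq hqq' hap' hap haq haq'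
        ht1 ht12 e1.symm e2.symm
    · subst hqq'
      have h1 : aq t1 = aq' t1 := fam_inj haq haq' ht1
      have h2 : ap' t1 ^ 2 < ap t1 ^ 2 := fam_sq_lt hap' hap hpp' ht1
      rw [h1] at e1
      linarith
    · have h1 : ap' t1 ^ 2 < ap t1 ^ 2 := fam_sq_lt hap' hap hpp' ht1
      have h2 : aq' t1 ^ 2 < aq t1 ^ 2 := fam_sq_lt haq' haq hqq' ht1
      linarith

theorem stmt_4 (p q p' q' : ℕ) (hpq : p ≤ q) (hpq' : p' ≤ q')
    (hne : (p, q) ≠ (p', q'))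
    (ap aq ap' aq' : ℝ → ℝ)
    (hap : ∀ h : ℝ, 0 ≤ h → IsRobinParam p h (ap h))
    (haq : ∀ h : ℝ, 0 ≤ h → IsRobinParam q h (aq h))
    (hap' : ∀ h : ℝ, 0 ≤ h → IsRobinParam p' h (ap' h))
    (haq' : ∀ h : ℝ, 0 ≤ h → IsRobinParam q' h (aq' h)) :
    {h : ℝ | 0 ≤ h ∧ (ap h) ^ 2 + (aq h) ^ 2 = (ap' h) ^ 2 + (aq' h) ^ 2}.Subsingleton := by
  rintro a ⟨ha0, hae⟩ b ⟨hb0, hbe⟩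
  by_contra hab
  rcases Ne.lt_or_gt hab with h | h
  · exact absurd (twoCross p q p' q' hpq hpq' hne ap aq ap' aq' hap haq hap' haq'
      ha0 h hae hbe) not_false
  · exact absurd (twoCross p q p' q' hpq hpq' hne ap aq ap' aq' hap haq hap' haq'
      hb0 h hbe hae) not_false
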